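/- For every a ∈ ℝ (including a = 0), the function φ_a is twice continuously differentiable in x and once in t on ℝ × (0,∞) and satisfies (1/2)·∂²φ_a/∂x² + ∂φ_a/∂t = −(a²/2)·φ_a there; equivalently, (x,t) ↦ exp(a²t/2)·φ_a(x,t) is space-time harmonic for the operator (1/2)∂²/∂x² + ∂/∂t. -/

import Mathlib

open Real Filter

/-- For `a ≠ 0`, the function `φ_a(x,t) = (π / sinh(aπ)) Σ_{k ∈ ℤ} sin(ax + 2kat) e^{−2(kx + k²t)}`. -/
noncomputable def phi (a x t : ℝ) : ℝ :=
  (Real.pi / Real.sinh (a * Real.pi)) *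
    ∑' k : ℤ, Real.sin (a * x + 2 * (k : ℝ) * a * t) * Real.exp (-2 * ((k : ℝ) * x + (k : ℝ) ^ 2 * t))

/-- The function `φ_0(x,t) = Σ_{k ∈ ℤ} (x + 2kt) e^{−2(kx + k²t)}`. -/
noncomputable def phi0 (x t : ℝ) : ℝ :=
  ∑' k : ℤ, (x + 2 * (k : ℝ) * t) * Real.exp (-2 * ((k : ℝ) * x + (k : ℝ) ^ 2 * t))

/-- `φ_a` for all `a ∈ ℝ`, with `φ_0` as the value at `a = 0`. -/
noncomputable def phiA (a x t : ℝ) : ℝ := if a = 0 then phi0 x t else phi a x t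

namespace PhiAux

/-- A sequence of polynomial growth. -/
def Tame (f : ℤ → ℝ) : Prop := ∃ C : ℝ, ∃ m : ℕ, ∀ k : ℤ, |f k| ≤ C * (|(k : ℝ)| + 1) ^ m

lemma one_le_abs_add_one (k : ℤ) : (1 : ℝ) ≤ |(k : ℝ)| + 1 := by
  have := abs_nonneg ((k : ℝ)); linarith

lemma tame_const (c : ℝ) : Tame (fun _ => c) :=
  ⟨|c|, 0, fun k => by simp⟩

lemma tame_coe : Tame (fun k : ℤ => (k : ℝ)) :=
  ⟨1, 1, fun k => by simp⟩

lemma Tame.nonneg_const {f : ℤ → ℝ} {C : ℝ} {m : ℕ}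
    (h : ∀ k : ℤ, |f k| ≤ C * (|(k : ℝ)| + 1) ^ m) : 0 ≤ C := by
  have h0 := h 0
  have : |((0:ℤ):ℝ)| = 0 := by simp
  rw [this] at h0
  simpa using le_trans (abs_nonneg _) h0

lemma Tame.mul {f g : ℤ → ℝ} (hf : Tame f) (hg : Tame g) : Tame (fun k => f k * g k) := by
  obtain ⟨C1, m1, h1⟩ := hf
  obtain ⟨C2, m2, h2⟩ := hg
  refine ⟨C1 * C2, m1 + m2, fun k => ?_⟩
  have e1 := h1 k; have e2 := h2 k
  have hC1 : 0 ≤ C1 * (|(k:ℝ)| + 1) ^ m1 := le_trans (abs_nonneg _) e1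
  calc |f k * g k| = |f k| * |g k| := abs_mul _ _
    _ ≤ (C1 * (|(k:ℝ)| + 1) ^ m1) * (C2 * (|(k:ℝ)| + 1) ^ m2) :=
        mul_le_mul e1 e2 (abs_nonneg _) hC1
    _ = C1 * C2 * (|(k:ℝ)| + 1) ^ (m1 + m2) := by rw [pow_add]; ring

lemma Tame.add {f g : ℤ → ℝ} (hf : Tame f) (hg : Tame g) : Tame (fun k => f k + g k) := by
  obtain ⟨C1, m1, h1⟩ := hf
  obtain ⟨C2, m2, h2⟩ := hg
  refine ⟨C1 + C2, max m1 m2, fun k => ?_⟩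
  have hb := one_le_abs_add_one k
  have p1 : (|(k:ℝ)| + 1) ^ m1 ≤ (|(k:ℝ)| + 1) ^ (max m1 m2) :=
    pow_le_pow_right₀ hb (le_max_left _ _)
  have p2 : (|(k:ℝ)| + 1) ^ m2 ≤ (|(k:ℝ)| + 1) ^ (max m1 m2) :=
    pow_le_pow_right₀ hb (le_max_right _ _)
  have e1 := h1 k; have e2 := h2 k
  have hC1 : 0 ≤ C1 := Tame.nonneg_const h1
  have hC2 : 0 ≤ C2 := Tame.nonneg_const h2
  have q1 : C1 * (|(k:ℝ)| + 1) ^ m1 ≤ C1 * (|(k:ℝ)| + 1) ^ (max m1 m2) :=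
    mul_le_mul_of_nonneg_left p1 hC1
  have q2 : C2 * (|(k:ℝ)| + 1) ^ m2 ≤ C2 * (|(k:ℝ)| + 1) ^ (max m1 m2) :=
    mul_le_mul_of_nonneg_left p2 hC2
  have := abs_add_le (f k) (g k)
  simp only []
  calc |f k + g k| ≤ |f k| + |g k| := abs_add_le _ _
    _ ≤ C1 * (|(k:ℝ)| + 1) ^ (max m1 m2) + C2 * (|(k:ℝ)| + 1) ^ (max m1 m2) := by linarith
    _ = (C1 + C2) * (|(k:ℝ)| + 1) ^ (max m1 m2) := by ring

lemma Tame.neg {f : ℤ → ℝ} (hf : Tame f) : Tame (fun k => -f k) := by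
  obtain ⟨C, m, h⟩ := hf
  exact ⟨C, m, fun k => by rw [abs_neg]; exact h k⟩

lemma Tame.sub {f g : ℤ → ℝ} (hf : Tame f) (hg : Tame g) : Tame (fun k => f k - g k) := by
  have := hf.add hg.neg
  simpa [sub_eq_add_neg] using this

lemma Tame.abs {f : ℤ → ℝ} (hf : Tame f) : Tame (fun k => |f k|) := by
  obtain ⟨C, m, h⟩ := hf
  exact ⟨C, m, fun k => by rw [abs_abs]; exact h k⟩

lemma Tame.const_mul {f : ℤ → ℝ} (hf : Tame f) (c : ℝ) : Tame (fun k => c * f k) :=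
  (tame_const c).mul hf

lemma Tame.congr {f g : ℤ → ℝ} (hf : Tame f) (h : ∀ k, f k = g k) : Tame g := by
  obtain ⟨C, m, hC⟩ := hf
  exact ⟨C, m, fun k => by rw [← h k]; exact hC k⟩

/-- Summability of `(n+1)^m r^n` for `0 ≤ r < 1`. -/
lemma summable_nat_pow_mul_geometric {r : ℝ} (m : ℕ) (h0 : 0 ≤ r) (h1 : r < 1) :
    Summable (fun n : ℕ => ((n : ℝ) + 1) ^ m * r ^ n) := by
  have hg : Summable (fun n : ℕ => (n : ℝ) ^ m * r ^ n) := by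
    have : ‖r‖ < 1 := by rwa [Real.norm_eq_abs, abs_of_nonneg h0]
    exact summable_pow_mul_geometric_of_norm_lt_one m this
  have hgeo : Summable (fun n : ℕ => r ^ n) := summable_geometric_of_lt_one h0 h1
  have hsum : Summable (fun n : ℕ => (2:ℝ)^m * ((n:ℝ)^m * r^n) + (2:ℝ)^m * r^n) :=
    (hg.mul_left _).add (hgeo.mul_left _)
  refine Summable.of_nonneg_of_le (fun n => by positivity) (fun n => ?_) hsum
  rcases Nat.eq_zero_or_pos n with hn | hn
  · subst hn
    simp only [Nat.cast_zero, zero_add, one_pow, pow_zero, mul_one]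
    rcases Nat.eq_zero_or_pos m with hm | hm
    · subst hm; norm_num
    · rw [zero_pow hm.ne']
      have : (1:ℝ) ≤ 2^m := one_le_pow₀ (by norm_num)
      nlinarith
  · have h2n : ((n:ℝ) + 1) ≤ 2 * n := by
      have : (1:ℝ) ≤ (n:ℝ) := by exact_mod_cast hn
      linarith
    have hle : ((n:ℝ) + 1)^m ≤ (2 * (n:ℝ))^m :=
      pow_le_pow_left₀ (show (0:ℝ) ≤ (n:ℝ)+1 by positivity) h2n m
    have hrn : (0:ℝ) ≤ r ^ n := by positivity
    calc ((n:ℝ) + 1)^m * r^n ≤ (2 * (n:ℝ))^m * r^n := mul_le_mul_of_nonneg_right hle hrn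
      _ = (2:ℝ)^m * ((n:ℝ)^m * r^n) := by rw [mul_pow]; ring
      _ ≤ (2:ℝ)^m * ((n:ℝ)^m * r^n) + (2:ℝ)^m * r^n := le_add_of_nonneg_right (by positivity)

/-- Master summability over ℕ. -/
lemma summable_master_nat (C : ℝ) (m : ℕ) (R τ : ℝ) (hτ : 0 < τ) :
    Summable (fun n : ℕ => C * ((n : ℝ) + 1) ^ m *
      Real.exp (2 * (n : ℝ) * R - 2 * (n : ℝ) ^ 2 * τ)) := by
  have key : ∀ n : ℕ, |C| * ((n : ℝ) + 1) ^ m * Real.exp (2 * (n:ℝ) * R - 2 * (n : ℝ) ^ 2 * τ)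
      ≤ (|C| * Real.exp (R^2 / τ)) * (((n:ℝ) + 1) ^ m * (Real.exp (-τ)) ^ n) := by
    intro n
    have hst : Real.sqrt τ ≠ 0 := ne_of_gt (Real.sqrt_pos.mpr hτ)
    have hs : Real.sqrt τ * Real.sqrt τ = τ := Real.mul_self_sqrt hτ.le
    have hs2 : (R / Real.sqrt τ) * (R / Real.sqrt τ) = R^2 / τ := by
      rw [div_mul_div_comm, hs]; ring
    have hcross : (Real.sqrt τ * (n:ℝ)) * (R / Real.sqrt τ) = (n:ℝ) * R := by
      field_simp
    have hsq := sq_nonneg (Real.sqrt τ * (n:ℝ) - R / Real.sqrt τ)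
    have h1 : 2 * (n:ℝ) * R ≤ τ * (n:ℝ)^2 + R^2/τ := by nlinarith
    have h2 : τ * (n:ℝ) ≤ τ * (n:ℝ)^2 := by
      have hn2 : (n:ℝ) ≤ (n:ℝ)^2 := by
        rcases Nat.eq_zero_or_pos n with hn | hn
        · subst hn; norm_num
        · have : (1:ℝ) ≤ (n:ℝ) := by exact_mod_cast hn
          nlinarith
      exact mul_le_mul_of_nonneg_left hn2 hτ.le
    have hexp : 2 * (n:ℝ) * R - 2 * (n:ℝ)^2 * τ ≤ R^2/τ + -(τ * n) := by nlinarith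
    have hrw : (Real.exp (-τ))^n = Real.exp (-(τ * (n:ℝ))) := by
      rw [← Real.exp_nat_mul]; ring_nf
    calc |C| * ((n : ℝ) + 1) ^ m * Real.exp (2 * (n:ℝ) * R - 2 * (n : ℝ) ^ 2 * τ)
        ≤ |C| * ((n : ℝ) + 1) ^ m * Real.exp (R^2/τ + -(τ * n)) :=
          mul_le_mul_of_nonneg_left (Real.exp_le_exp.mpr hexp) (by positivity)
      _ = (|C| * Real.exp (R^2 / τ)) * (((n:ℝ) + 1) ^ m * (Real.exp (-τ)) ^ n) := by
          rw [hrw, Real.exp_add]; ring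
  have hr0 : (0:ℝ) ≤ Real.exp (-τ) := (Real.exp_pos _).le
  have hr1 : Real.exp (-τ) < 1 := Real.exp_lt_one_iff.mpr (by linarith)
  have hs := (summable_nat_pow_mul_geometric m hr0 hr1).mul_left (|C| * Real.exp (R^2 / τ))
  apply Summable.of_norm_bounded hs
  intro n
  rw [Real.norm_eq_abs, abs_mul, abs_mul, Real.abs_exp,
    abs_of_nonneg (show (0:ℝ) ≤ ((n:ℝ)+1)^m by positivity)]
  exact key n

/-- Master summability: polynomial × gaussian-type bound over ℤ. -/
lemma summable_master (C : ℝ) (m : ℕ) (R τ : ℝ) (hτ : 0 < τ) :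
    Summable (fun k : ℤ => C * (|(k : ℝ)| + 1) ^ m *
      Real.exp (2 * |(k : ℝ)| * R - 2 * (k : ℝ) ^ 2 * τ)) := by
  have hnat := summable_master_nat C m R τ hτ
  apply Summable.of_nat_of_neg_add_one
  · have : ∀ n : ℕ, C * (|((n:ℤ) : ℝ)| + 1) ^ m *
        Real.exp (2 * |((n:ℤ) : ℝ)| * R - 2 * ((n:ℤ) : ℝ) ^ 2 * τ)
        = C * ((n : ℝ) + 1) ^ m * Real.exp (2 * (n:ℝ) * R - 2 * (n : ℝ) ^ 2 * τ) := by
      intro n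
      have : |((n:ℤ) : ℝ)| = (n : ℝ) := by
        push_cast; exact abs_of_nonneg (by positivity)
      rw [this]; push_cast; ring_nf
    exact hnat.congr fun n => (this n).symm
  · have hsh : Summable (fun n : ℕ => C * (((n+1 : ℕ) : ℝ) + 1) ^ m *
        Real.exp (2 * ((n+1:ℕ) : ℝ) * R - 2 * ((n+1:ℕ) : ℝ) ^ 2 * τ)) :=
      (summable_nat_add_iff 1).mpr hnat
    have : ∀ n : ℕ, C * (|(Int.cast (-((n:ℤ)+1)) : ℝ)| + 1) ^ m *
        Real.exp (2 * |(Int.cast (-((n:ℤ)+1)) : ℝ)| * R - 2 * (Int.cast (-((n:ℤ)+1)) : ℝ) ^ 2 * τ)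
        = C * (((n+1 : ℕ) : ℝ) + 1) ^ m *
        Real.exp (2 * ((n+1:ℕ) : ℝ) * R - 2 * ((n+1:ℕ) : ℝ) ^ 2 * τ) := by
      intro n
      have hc : (Int.cast (-((n:ℤ)+1)) : ℝ) = -((n:ℝ)+1) := by push_cast; ring
      rw [hc, abs_neg, abs_of_nonneg (show (0:ℝ) ≤ (n:ℝ)+1 by positivity)]
      push_cast; ring_nf
    exact hsh.congr fun n => (this n).symm


/-- Generic sine/cosine × exponential term. -/
noncomputable def trig (p q A c B d : ℤ → ℝ) (k : ℤ) (y : ℝ) : ℝ :=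
  (p k * Real.sin (A k * y + c k) + q k * Real.cos (A k * y + c k)) * Real.exp (B k * y + d k)

/-- Coefficients of the derivative of a `trig` family. -/
def Dp (p q A B : ℤ → ℝ) : ℤ → ℝ := fun k => p k * B k - q k * A k
def Dq (p q A B : ℤ → ℝ) : ℤ → ℝ := fun k => q k * B k + p k * A k

lemma tame_Dp {p q A B : ℤ → ℝ} (hp : Tame p) (hq : Tame q) (hA : Tame A) (hB : Tame B) :
    Tame (Dp p q A B) := (hp.mul hB).sub (hq.mul hA)

lemma tame_Dq {p q A B : ℤ → ℝ} (hp : Tame p) (hq : Tame q) (hA : Tame A) (hB : Tame B) :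
    Tame (Dq p q A B) := (hq.mul hB).add (hp.mul hA)

lemma trig_hasDerivAt (p q A c B d : ℤ → ℝ) (k : ℤ) (y : ℝ) :
    HasDerivAt (fun z => trig p q A c B d k z) (trig (Dp p q A B) (Dq p q A B) A c B d k y) y := by
  have hlin : HasDerivAt (fun z : ℝ => A k * z + c k) (A k) y := by
    simpa using ((hasDerivAt_id y).const_mul (A k)).add_const (c k)
  have hlin2 : HasDerivAt (fun z : ℝ => B k * z + d k) (B k) y := by
    simpa using ((hasDerivAt_id y).const_mul (B k)).add_const (d k)
  have hsin : HasDerivAt (fun z : ℝ => Real.sin (A k * z + c k))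
      (Real.cos (A k * y + c k) * A k) y := (Real.hasDerivAt_sin _).comp y hlin
  have hcos : HasDerivAt (fun z : ℝ => Real.cos (A k * z + c k))
      (-Real.sin (A k * y + c k) * A k) y := (Real.hasDerivAt_cos _).comp y hlin
  have hexp : HasDerivAt (fun z : ℝ => Real.exp (B k * z + d k))
      (Real.exp (B k * y + d k) * B k) y := (Real.hasDerivAt_exp _).comp y hlin2
  have h1 : HasDerivAt (fun z : ℝ => p k * Real.sin (A k * z + c k) + q k * Real.cos (A k * z + c k))
      (p k * (Real.cos (A k * y + c k) * A k) + q k * (-Real.sin (A k * y + c k) * A k)) y :=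
    (hsin.const_mul (p k)).add (hcos.const_mul (q k))
  have := h1.mul hexp
  refine this.congr_deriv ?_
  simp only [trig, Dp, Dq]
  ring

lemma trig_abs_le (p q A c B d : ℤ → ℝ) (k : ℤ) (y : ℝ) :
    |trig p q A c B d k y| ≤ (|p k| + |q k|) * Real.exp (B k * y + d k) := by
  rw [trig, abs_mul, Real.abs_exp]
  apply mul_le_mul_of_nonneg_right _ (Real.exp_pos _).le
  calc |p k * Real.sin (A k * y + c k) + q k * Real.cos (A k * y + c k)|
      ≤ |p k * Real.sin (A k * y + c k)| + |q k * Real.cos (A k * y + c k)| := abs_add_le _ _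
    _ ≤ |p k| * 1 + |q k| * 1 := by
        rw [abs_mul, abs_mul]
        gcongr
        · exact Real.abs_sin_le_one _
        · exact Real.abs_cos_le_one _
    _ = |p k| + |q k| := by ring

/-- Summable bound for tame `trig` families under a gaussian exponent bound. -/
lemma summable_trig {p q A c B d : ℤ → ℝ} (hp : Tame p) (hq : Tame q)
    {R τ : ℝ} (hτ : 0 < τ) {y : ℝ}
    (hexp : ∀ k : ℤ, B k * y + d k ≤ 2 * |(k:ℝ)| * R - 2 * (k:ℝ)^2 * τ) :
    Summable (fun k : ℤ => trig p q A c B d k y) := by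
  obtain ⟨C, m, hC⟩ := hp.abs.add hq.abs
  apply Summable.of_norm_bounded (summable_master C m R τ hτ)
  intro k
  rw [Real.norm_eq_abs]
  calc |trig p q A c B d k y| ≤ (|p k| + |q k|) * Real.exp (B k * y + d k) :=
        trig_abs_le p q A c B d k y
    _ ≤ (C * (|(k:ℝ)| + 1)^m) * Real.exp (2 * |(k:ℝ)| * R - 2 * (k:ℝ)^2 * τ) := by
        have h1 := hC k
        simp only [abs_abs] at h1
        have h1' : |p k| + |q k| ≤ C * (|(k:ℝ)| + 1)^m :=
          le_trans (le_abs_self _) h1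
        exact mul_le_mul h1' (Real.exp_le_exp.mpr (hexp k)) (Real.exp_pos _).le
          (le_trans (by positivity) h1')
    _ = C * (|(k:ℝ)| + 1)^m * Real.exp (2 * |(k:ℝ)| * R - 2 * (k:ℝ)^2 * τ) := by ring

/-- Differentiation of a tame `trig` series on an open preconnected set. -/
lemma hasDerivAt_tsum_trig {p q A c B d : ℤ → ℝ}
    (hp : Tame p) (hq : Tame q) (hA : Tame A) (hB : Tame B)
    {s : Set ℝ} (hs : IsOpen s) (hc : IsPreconnected s) {R τ : ℝ} (hτ : 0 < τ)
    (hexp : ∀ k : ℤ, ∀ y ∈ s, B k * y + d k ≤ 2 * |(k:ℝ)| * R - 2 * (k:ℝ)^2 * τ)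
    {y : ℝ} (hy : y ∈ s) :
    HasDerivAt (fun z => ∑' k : ℤ, trig p q A c B d k z)
      (∑' k : ℤ, trig (Dp p q A B) (Dq p q A B) A c B d k y) y := by
  obtain ⟨C, m, hC⟩ := ((tame_Dp hp hq hA hB).abs.add (tame_Dq hp hq hA hB).abs)
  apply hasDerivAt_tsum_of_isPreconnected (summable_master C m R τ hτ) hs hc
    (fun k z hz => trig_hasDerivAt p q A c B d k z)
    (fun k z hz => ?_) hy (summable_trig hp hq hτ (fun k => hexp k y hy)) hy
  rw [Real.norm_eq_abs]
  calc |trig (Dp p q A B) (Dq p q A B) A c B d k z|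
      ≤ (|Dp p q A B k| + |Dq p q A B k|) * Real.exp (B k * z + d k) := trig_abs_le _ _ _ _ _ _ _ _
    _ ≤ (C * (|(k:ℝ)| + 1)^m) * Real.exp (2 * |(k:ℝ)| * R - 2 * (k:ℝ)^2 * τ) := by
        have h1 := hC k
        simp only [abs_abs] at h1
        have h1' : |Dp p q A B k| + |Dq p q A B k| ≤ C * (|(k:ℝ)| + 1)^m :=
          le_trans (le_abs_self _) h1
        exact mul_le_mul h1' (Real.exp_le_exp.mpr (hexp k z hz)) (Real.exp_pos _).le
          (le_trans (by positivity) h1')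
    _ = C * (|(k:ℝ)| + 1)^m * Real.exp (2 * |(k:ℝ)| * R - 2 * (k:ℝ)^2 * τ) := by ring

/-- Generic linear × exponential term. -/
noncomputable def lin (p q B d : ℤ → ℝ) (k : ℤ) (y : ℝ) : ℝ :=
  (p k * y + q k) * Real.exp (B k * y + d k)

/-- Coefficients of the derivative of a `lin` family. -/
def Lp (p B : ℤ → ℝ) : ℤ → ℝ := fun k => p k * B k
def Lq (p q B : ℤ → ℝ) : ℤ → ℝ := fun k => p k + q k * B k

lemma tame_Lp {p B : ℤ → ℝ} (hp : Tame p) (hB : Tame B) : Tame (Lp p B) := hp.mul hB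

lemma tame_Lq {p q B : ℤ → ℝ} (hp : Tame p) (hq : Tame q) (hB : Tame B) : Tame (Lq p q B) :=
  hp.add (hq.mul hB)

lemma lin_hasDerivAt (p q B d : ℤ → ℝ) (k : ℤ) (y : ℝ) :
    HasDerivAt (fun z => lin p q B d k z) (lin (Lp p B) (Lq p q B) B d k y) y := by
  have hlin2 : HasDerivAt (fun z : ℝ => B k * z + d k) (B k) y := by
    simpa using ((hasDerivAt_id y).const_mul (B k)).add_const (d k)
  have hexp : HasDerivAt (fun z : ℝ => Real.exp (B k * z + d k))
      (Real.exp (B k * y + d k) * B k) y := (Real.hasDerivAt_exp _).comp y hlin2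
  have h1 : HasDerivAt (fun z : ℝ => p k * z + q k) (p k) y := by
    simpa using ((hasDerivAt_id y).const_mul (p k)).add_const (q k)
  have := h1.mul hexp
  refine this.congr_deriv ?_
  simp only [lin, Lp, Lq]
  ring

lemma lin_abs_le (p q B d : ℤ → ℝ) (k : ℤ) {y R' : ℝ} (hy : |y| ≤ R') :
    |lin p q B d k y| ≤ (|p k| * R' + |q k|) * Real.exp (B k * y + d k) := by
  rw [lin, abs_mul, Real.abs_exp]
  apply mul_le_mul_of_nonneg_right _ (Real.exp_pos _).le
  calc |p k * y + q k| ≤ |p k * y| + |q k| := abs_add_le _ _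
    _ ≤ |p k| * R' + |q k| := by
        rw [abs_mul]
        have := abs_nonneg (p k)
        nlinarith [abs_nonneg y]

/-- Summable bound for tame `lin` families. -/
lemma summable_lin {p q B d : ℤ → ℝ} (hp : Tame p) (hq : Tame q)
    {R τ R' : ℝ} (hτ : 0 < τ) {y : ℝ} (hy : |y| ≤ R')
    (hexp : ∀ k : ℤ, B k * y + d k ≤ 2 * |(k:ℝ)| * R - 2 * (k:ℝ)^2 * τ) :
    Summable (fun k : ℤ => lin p q B d k y) := by
  obtain ⟨C, m, hC⟩ := (hp.abs.const_mul R').add hq.abs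
  apply Summable.of_norm_bounded (summable_master C m R τ hτ)
  intro k
  rw [Real.norm_eq_abs]
  have hR0 : 0 ≤ R' := le_trans (abs_nonneg y) hy
  have h2 : R' * |p k| + |q k| ≤ C * (|(k:ℝ)| + 1)^m := le_trans (le_abs_self _) (hC k)
  have h1' : |p k| * R' + |q k| ≤ C * (|(k:ℝ)| + 1)^m := by linarith [h2]
  have hnn : 0 ≤ |p k| * R' + |q k| :=
    add_nonneg (mul_nonneg (abs_nonneg _) hR0) (abs_nonneg _)
  calc |lin p q B d k y| ≤ (|p k| * R' + |q k|) * Real.exp (B k * y + d k) :=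
        lin_abs_le p q B d k hy
    _ ≤ (C * (|(k:ℝ)| + 1)^m) * Real.exp (2 * |(k:ℝ)| * R - 2 * (k:ℝ)^2 * τ) :=
        mul_le_mul h1' (Real.exp_le_exp.mpr (hexp k)) (Real.exp_pos _).le
          (le_trans hnn h1')
    _ = C * (|(k:ℝ)| + 1)^m * Real.exp (2 * |(k:ℝ)| * R - 2 * (k:ℝ)^2 * τ) := by ring

/-- Differentiation of a tame `lin` series on an open preconnected set. -/
lemma hasDerivAt_tsum_lin {p q B d : ℤ → ℝ}
    (hp : Tame p) (hq : Tame q) (hB : Tame B)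
    {s : Set ℝ} (hs : IsOpen s) (hc : IsPreconnected s) {R τ R' : ℝ} (hτ : 0 < τ)
    (hR' : ∀ y ∈ s, |y| ≤ R')
    (hexp : ∀ k : ℤ, ∀ y ∈ s, B k * y + d k ≤ 2 * |(k:ℝ)| * R - 2 * (k:ℝ)^2 * τ)
    {y : ℝ} (hy : y ∈ s) :
    HasDerivAt (fun z => ∑' k : ℤ, lin p q B d k z)
      (∑' k : ℤ, lin (Lp p B) (Lq p q B) B d k y) y := by
  obtain ⟨C, m, hC⟩ := ((tame_Lp hp hB).abs.const_mul R').add (tame_Lq hp hq hB).abs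
  apply hasDerivAt_tsum_of_isPreconnected (summable_master C m R τ hτ) hs hc
    (fun k z hz => lin_hasDerivAt p q B d k z)
    (fun k z hz => ?_) hy (summable_lin hp hq hτ (hR' y hy) (fun k => hexp k y hy)) hy
  rw [Real.norm_eq_abs]
  have hR0 : 0 ≤ R' := le_trans (abs_nonneg z) (hR' z hz)
  have h2 : R' * |Lp p B k| + |Lq p q B k| ≤ C * (|(k:ℝ)| + 1)^m :=
    le_trans (le_abs_self _) (hC k)
  have h1' : |Lp p B k| * R' + |Lq p q B k| ≤ C * (|(k:ℝ)| + 1)^m := by linarith [h2]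
  have hnn : 0 ≤ |Lp p B k| * R' + |Lq p q B k| :=
    add_nonneg (mul_nonneg (abs_nonneg _) hR0) (abs_nonneg _)
  calc |lin (Lp p B) (Lq p q B) B d k z|
      ≤ (|Lp p B k| * R' + |Lq p q B k|) * Real.exp (B k * z + d k) :=
        lin_abs_le _ _ _ _ _ (hR' z hz)
    _ ≤ (C * (|(k:ℝ)| + 1)^m) * Real.exp (2 * |(k:ℝ)| * R - 2 * (k:ℝ)^2 * τ) :=
        mul_le_mul h1' (Real.exp_le_exp.mpr (hexp k z hz)) (Real.exp_pos _).le
          (le_trans hnn h1')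
    _ = C * (|(k:ℝ)| + 1)^m * Real.exp (2 * |(k:ℝ)| * R - 2 * (k:ℝ)^2 * τ) := by ring

/-! ### Specialization: the series defining `phi` and `phi0` and their derivatives -/

/-- Coefficient pairs for x-derivatives of the `phi` series. -/
def PQx (a : ℝ) : ℕ → ((ℤ → ℝ) × (ℤ → ℝ))
  | 0 => (fun _ => 1, fun _ => 0)
  | i+1 => (Dp (PQx a i).1 (PQx a i).2 (fun _ => a) (fun k => -2*(k:ℝ)),
            Dq (PQx a i).1 (PQx a i).2 (fun _ => a) (fun k => -2*(k:ℝ)))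

/-- Coefficient pairs for t-derivatives of the `phi` series. -/
def PQt (a : ℝ) : ℕ → ((ℤ → ℝ) × (ℤ → ℝ))
  | 0 => (fun _ => 1, fun _ => 0)
  | i+1 => (Dp (PQt a i).1 (PQt a i).2 (fun k => 2*(k:ℝ)*a) (fun k => -2*(k:ℝ)^2),
            Dq (PQt a i).1 (PQt a i).2 (fun k => 2*(k:ℝ)*a) (fun k => -2*(k:ℝ)^2))

lemma tame_two_coe : Tame (fun k : ℤ => -2*(k:ℝ)) := (tame_const (-2)).mul tame_coe

lemma tame_two_coe_sq : Tame (fun k : ℤ => -2*(k:ℝ)^2) :=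
  (tame_two_coe.mul tame_coe).congr (fun k => by ring)

lemma tame_PQx (a : ℝ) (i : ℕ) : Tame (PQx a i).1 ∧ Tame (PQx a i).2 := by
  induction i with
  | zero => exact ⟨tame_const 1, tame_const 0⟩
  | succ n ih =>
    exact ⟨tame_Dp ih.1 ih.2 (tame_const a) tame_two_coe,
           tame_Dq ih.1 ih.2 (tame_const a) tame_two_coe⟩

lemma tame_PQt (a : ℝ) (i : ℕ) : Tame (PQt a i).1 ∧ Tame (PQt a i).2 := by
  induction i with
  | zero => exact ⟨tame_const 1, tame_const 0⟩
  | succ n ih =>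
    exact ⟨tame_Dp ih.1 ih.2 ((tame_const 2).mul tame_coe |>.mul (tame_const a)) tame_two_coe_sq,
           tame_Dq ih.1 ih.2 ((tame_const 2).mul tame_coe |>.mul (tame_const a)) tame_two_coe_sq⟩

/-- i-th x-derivative candidate of the `phi` series at fixed `t`. -/
noncomputable def Fx (a t : ℝ) (i : ℕ) : ℝ → ℝ := fun y =>
  ∑' k : ℤ, trig (PQx a i).1 (PQx a i).2 (fun _ => a) (fun k => 2*(k:ℝ)*a*t)
    (fun k => -2*(k:ℝ)) (fun k => -2*(k:ℝ)^2*t) k y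

/-- i-th t-derivative candidate of the `phi` series at fixed `x`. -/
noncomputable def Gt (a x : ℝ) (i : ℕ) : ℝ → ℝ := fun y =>
  ∑' k : ℤ, trig (PQt a i).1 (PQt a i).2 (fun k => 2*(k:ℝ)*a) (fun _ => a*x)
    (fun k => -2*(k:ℝ)^2) (fun k => -2*(k:ℝ)*x) k y

lemma mem_Ioo_self (y : ℝ) : y ∈ Set.Ioo (y-1) (y+1) := by
  constructor <;> linarith

lemma abs_le_of_mem_Ioo {y z : ℝ} (hz : z ∈ Set.Ioo (y-1) (y+1)) : |z| ≤ |y| + 1 := by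
  rw [abs_le]
  obtain ⟨h1, h2⟩ := hz
  constructor
  · have := neg_abs_le y; linarith
  · have := le_abs_self y; linarith

lemma hexp_x (t : ℝ) (y : ℝ) : ∀ k : ℤ, ∀ z ∈ Set.Ioo (y-1) (y+1),
    (-2*(k:ℝ)) * z + (-2*(k:ℝ)^2*t)
      ≤ 2 * |(k:ℝ)| * (|y|+1) - 2 * (k:ℝ)^2 * t := by
  intro k z hz
  have habs : -((k:ℝ) * z) ≤ |(k:ℝ)| * |z| := by
    rw [← abs_mul]; exact neg_le_abs _
  have h2 : |(k:ℝ)| * |z| ≤ |(k:ℝ)| * (|y|+1) :=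
    mul_le_mul_of_nonneg_left (abs_le_of_mem_Ioo hz) (abs_nonneg _)
  nlinarith

lemma hexp_t (x : ℝ) {t : ℝ} (ht : 0 < t) : ∀ k : ℤ, ∀ z ∈ Set.Ioo (t/2) (t+1),
    (-2*(k:ℝ)^2) * z + (-2*(k:ℝ)*x)
      ≤ 2 * |(k:ℝ)| * |x| - 2 * (k:ℝ)^2 * (t/2) := by
  intro k z hz
  have habs : -((k:ℝ) * x) ≤ |(k:ℝ)| * |x| := by
    rw [← abs_mul]; exact neg_le_abs _
  have hk2 : (0:ℝ) ≤ (k:ℝ)^2 := sq_nonneg _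
  have hz1 : t/2 ≤ z := hz.1.le
  nlinarith

lemma hasDerivAt_Fx (a : ℝ) {t : ℝ} (ht : 0 < t) (i : ℕ) (y : ℝ) :
    HasDerivAt (Fx a t i) (Fx a t (i+1) y) y := by
  exact hasDerivAt_tsum_trig (p := (PQx a i).1) (q := (PQx a i).2) (A := fun _ => a)
    (c := fun k => 2*(k:ℝ)*a*t) (B := fun k => -2*(k:ℝ)) (d := fun k => -2*(k:ℝ)^2*t)
    (tame_PQx a i).1 (tame_PQx a i).2 (tame_const a) tame_two_coe
    (isOpen_Ioo (a := y-1) (b := y+1)) ((convex_Ioo _ _).isPreconnected) ht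
    (hexp_x t y) (mem_Ioo_self y)

lemma hasDerivAt_Gt (a x : ℝ) {t : ℝ} (ht : 0 < t) (i : ℕ) (y : ℝ) (hy : y ∈ Set.Ioo (t/2) (t+1)) :
    HasDerivAt (Gt a x i) (Gt a x (i+1) y) y := by
  exact hasDerivAt_tsum_trig (p := (PQt a i).1) (q := (PQt a i).2) (A := fun k => 2*(k:ℝ)*a)
    (c := fun _ => a*x) (B := fun k => -2*(k:ℝ)^2) (d := fun k => -2*(k:ℝ)*x)
    (tame_PQt a i).1 (tame_PQt a i).2
    ((tame_const 2).mul tame_coe |>.mul (tame_const a)) tame_two_coe_sq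
    (isOpen_Ioo (a := t/2) (b := t+1)) ((convex_Ioo _ _).isPreconnected) (half_pos ht)
    (hexp_t x ht) hy

/-! ### Specialization for `phi0` (the case `a = 0`) -/

/-- Coefficient pairs for x-derivatives of the `phi0` series. -/
def PQ0x (t : ℝ) : ℕ → ((ℤ → ℝ) × (ℤ → ℝ))
  | 0 => (fun _ => 1, fun k => 2*(k:ℝ)*t)
  | i+1 => (Lp (PQ0x t i).1 (fun k => -2*(k:ℝ)),
            Lq (PQ0x t i).1 (PQ0x t i).2 (fun k => -2*(k:ℝ)))

/-- Coefficient pairs for t-derivatives of the `phi0` series. -/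
def PQ0t (x : ℝ) : ℕ → ((ℤ → ℝ) × (ℤ → ℝ))
  | 0 => (fun k => 2*(k:ℝ), fun _ => x)
  | i+1 => (Lp (PQ0t x i).1 (fun k => -2*(k:ℝ)^2),
            Lq (PQ0t x i).1 (PQ0t x i).2 (fun k => -2*(k:ℝ)^2))

lemma tame_PQ0x (t : ℝ) (i : ℕ) : Tame (PQ0x t i).1 ∧ Tame (PQ0x t i).2 := by
  induction i with
  | zero => exact ⟨tame_const 1, ((tame_const 2).mul tame_coe).mul (tame_const t)⟩
  | succ n ih => exact ⟨tame_Lp ih.1 tame_two_coe, tame_Lq ih.1 ih.2 tame_two_coe⟩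

lemma tame_PQ0t (x : ℝ) (i : ℕ) : Tame (PQ0t x i).1 ∧ Tame (PQ0t x i).2 := by
  induction i with
  | zero => exact ⟨(tame_const 2).mul tame_coe, tame_const x⟩
  | succ n ih => exact ⟨tame_Lp ih.1 tame_two_coe_sq, tame_Lq ih.1 ih.2 tame_two_coe_sq⟩

/-- i-th x-derivative candidate of the `phi0` series at fixed `t`. -/
noncomputable def F0x (t : ℝ) (i : ℕ) : ℝ → ℝ := fun y =>
  ∑' k : ℤ, lin (PQ0x t i).1 (PQ0x t i).2 (fun k => -2*(k:ℝ)) (fun k => -2*(k:ℝ)^2*t) k y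

/-- i-th t-derivative candidate of the `phi0` series at fixed `x`. -/
noncomputable def G0t (x : ℝ) (i : ℕ) : ℝ → ℝ := fun y =>
  ∑' k : ℤ, lin (PQ0t x i).1 (PQ0t x i).2 (fun k => -2*(k:ℝ)^2) (fun k => -2*(k:ℝ)*x) k y

lemma abs_le_of_mem_Ioo_t {t z : ℝ} (ht : 0 < t) (hz : z ∈ Set.Ioo (t/2) (t+1)) :
    |z| ≤ |t| + 1 := by
  rw [abs_le]
  obtain ⟨h1, h2⟩ := hz
  have := le_abs_self t
  have := abs_nonneg t
  constructor <;> linarith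

lemma hasDerivAt_F0x {t : ℝ} (ht : 0 < t) (i : ℕ) (y : ℝ) :
    HasDerivAt (F0x t i) (F0x t (i+1) y) y := by
  exact hasDerivAt_tsum_lin (p := (PQ0x t i).1) (q := (PQ0x t i).2)
    (B := fun k => -2*(k:ℝ)) (d := fun k => -2*(k:ℝ)^2*t)
    (tame_PQ0x t i).1 (tame_PQ0x t i).2 tame_two_coe
    (isOpen_Ioo (a := y-1) (b := y+1)) ((convex_Ioo _ _).isPreconnected) ht
    (fun z hz => abs_le_of_mem_Ioo hz) (hexp_x t y) (mem_Ioo_self y)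

lemma hasDerivAt_G0t (x : ℝ) {t : ℝ} (ht : 0 < t) (i : ℕ) (y : ℝ)
    (hy : y ∈ Set.Ioo (t/2) (t+1)) :
    HasDerivAt (G0t x i) (G0t x (i+1) y) y := by
  exact hasDerivAt_tsum_lin (p := (PQ0t x i).1) (q := (PQ0t x i).2)
    (B := fun k => -2*(k:ℝ)^2) (d := fun k => -2*(k:ℝ)*x)
    (tame_PQ0t x i).1 (tame_PQ0t x i).2 tame_two_coe_sq
    (isOpen_Ioo (a := t/2) (b := t+1)) ((convex_Ioo _ _).isPreconnected) (half_pos ht)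
    (fun z hz => abs_le_of_mem_Ioo_t ht hz) (hexp_t x ht) hy

/-! ### Linking the abstract series to `phi` and `phi0` -/

lemma Fx_zero_eq (a t x : ℝ) :
    Fx a t 0 x = ∑' k : ℤ, Real.sin (a * x + 2 * (k : ℝ) * a * t) *
      Real.exp (-2 * ((k : ℝ) * x + (k : ℝ) ^ 2 * t)) := by
  simp only [Fx]
  refine tsum_congr fun k => ?_
  simp only [trig, PQx]
  rw [show (-2*(k:ℝ)) * x + (-2*(k:ℝ)^2*t) = -2 * ((k:ℝ) * x + (k:ℝ)^2 * t) from by ring]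
  ring

lemma Gt_zero_eq (a x y : ℝ) :
    Gt a x 0 y = ∑' k : ℤ, Real.sin (a * x + 2 * (k : ℝ) * a * y) *
      Real.exp (-2 * ((k : ℝ) * x + (k : ℝ) ^ 2 * y)) := by
  simp only [Gt]
  refine tsum_congr fun k => ?_
  simp only [trig, PQt]
  rw [show (2*(k:ℝ)*a) * y + a*x = a * x + 2 * (k:ℝ) * a * y from by ring,
      show (-2*(k:ℝ)^2) * y + (-2*(k:ℝ)*x) = -2 * ((k:ℝ) * x + (k:ℝ)^2 * y) from by ring]
  ring

lemma F0x_zero_eq (t x : ℝ) :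
    F0x t 0 x = ∑' k : ℤ, (x + 2 * (k : ℝ) * t) *
      Real.exp (-2 * ((k : ℝ) * x + (k : ℝ) ^ 2 * t)) := by
  simp only [F0x]
  refine tsum_congr fun k => ?_
  simp only [lin, PQ0x]
  rw [show (-2*(k:ℝ)) * x + (-2*(k:ℝ)^2*t) = -2 * ((k:ℝ) * x + (k:ℝ)^2 * t) from by ring]
  ring

lemma G0t_zero_eq (x y : ℝ) :
    G0t x 0 y = ∑' k : ℤ, (x + 2 * (k : ℝ) * y) *
      Real.exp (-2 * ((k : ℝ) * x + (k : ℝ) ^ 2 * y)) := by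
  simp only [G0t]
  refine tsum_congr fun k => ?_
  simp only [lin, PQ0t]
  rw [show (-2*(k:ℝ)^2) * y + (-2*(k:ℝ)*x) = -2 * ((k:ℝ) * x + (k:ℝ)^2 * y) from by ring]
  ring

/-! ### The key pointwise PDE identities -/

lemma key_ne (a x t : ℝ) (ht : 0 < t) :
    (1/2) * Fx a t (0+1+1) x + Gt a x (0+1) t = -(a^2/2) * Fx a t 0 x := by
  have hsum2 : Summable (fun k : ℤ => trig (PQx a (0+1+1)).1 (PQx a (0+1+1)).2 (fun _ => a)
      (fun k => 2*(k:ℝ)*a*t) (fun k => -2*(k:ℝ)) (fun k => -2*(k:ℝ)^2*t) k x) :=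
    summable_trig (tame_PQx a _).1 (tame_PQx a _).2 ht
      (fun k => hexp_x t x k x (mem_Ioo_self x))
  have hsumt : Summable (fun k : ℤ => trig (PQt a (0+1)).1 (PQt a (0+1)).2 (fun k => 2*(k:ℝ)*a)
      (fun _ => a*x) (fun k => -2*(k:ℝ)^2) (fun k => -2*(k:ℝ)*x) k t) :=
    summable_trig (tame_PQt a _).1 (tame_PQt a _).2 (half_pos ht)
      (fun k => hexp_t x ht k t ⟨by linarith, by linarith⟩)
  simp only [Fx, Gt]
  rw [← tsum_mul_left, ← Summable.tsum_add (hsum2.mul_left (1/2)) hsumt, ← tsum_mul_left]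
  refine tsum_congr fun k => ?_
  simp only [trig, PQx, PQt, Dp, Dq]
  rw [show (2*(k:ℝ)*a)*t + a*x = a*x + 2*(k:ℝ)*a*t from by ring,
      show (-2*(k:ℝ)^2)*t + (-2*(k:ℝ)*x) = (-2*(k:ℝ))*x + (-2*(k:ℝ)^2*t) from by ring]
  ring

lemma key_zero (x t : ℝ) (ht : 0 < t) :
    (1/2) * F0x t (0+1+1) x + G0t x (0+1) t = 0 := by
  have hsum2 : Summable (fun k : ℤ => lin (PQ0x t (0+1+1)).1 (PQ0x t (0+1+1)).2
      (fun k => -2*(k:ℝ)) (fun k => -2*(k:ℝ)^2*t) k x) :=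
    summable_lin (tame_PQ0x t _).1 (tame_PQ0x t _).2 ht (le_refl |x|)
      (fun k => hexp_x t x k x (mem_Ioo_self x))
  have hsumt : Summable (fun k : ℤ => lin (PQ0t x (0+1)).1 (PQ0t x (0+1)).2
      (fun k => -2*(k:ℝ)^2) (fun k => -2*(k:ℝ)*x) k t) :=
    summable_lin (tame_PQ0t x _).1 (tame_PQ0t x _).2 (half_pos ht)
      (abs_le_of_mem_Ioo_t ht ⟨by linarith, by linarith⟩)
      (fun k => hexp_t x ht k t ⟨by linarith, by linarith⟩)
  simp only [F0x, G0t]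
  rw [← tsum_mul_left, ← Summable.tsum_add (hsum2.mul_left (1/2)) hsumt]
  rw [show (0:ℝ) = ∑' (_ : ℤ), (0:ℝ) from (tsum_zero).symm]
  refine tsum_congr fun k => ?_
  simp only [lin, PQ0x, PQ0t, Lp, Lq]
  rw [show (-2*(k:ℝ)^2)*t + (-2*(k:ℝ)*x) = (-2*(k:ℝ))*x + (-2*(k:ℝ)^2*t) from by ring]
  ring

/-! ### Smoothness helpers -/

lemma contDiff_two_of_chain {f0 f1 f2 f3 : ℝ → ℝ}
    (h0 : ∀ y, HasDerivAt f0 (f1 y) y) (h1 : ∀ y, HasDerivAt f1 (f2 y) y)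
    (h2 : ∀ y, HasDerivAt f2 (f3 y) y) : ContDiff ℝ 2 f0 := by
  have hd0 : deriv f0 = f1 := funext fun y => (h0 y).deriv
  have hd1 : deriv f1 = f2 := funext fun y => (h1 y).deriv
  rw [show (2 : WithTop ℕ∞) = 1 + 1 from rfl, contDiff_succ_iff_deriv]
  refine ⟨fun y => (h0 y).differentiableAt, by simp, ?_⟩
  rw [hd0, contDiff_one_iff_deriv, hd1]
  exact ⟨fun y => (h1 y).differentiableAt,
    continuous_iff_continuousAt.mpr fun y => (h2 y).differentiableAt.continuousAt⟩

lemma contDiffOn_one_of_chain {f0 f1 f2 : ℝ → ℝ}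
    (h0 : ∀ y : ℝ, 0 < y → HasDerivAt f0 (f1 y) y)
    (h1 : ∀ y : ℝ, 0 < y → HasDerivAt f1 (f2 y) y) :
    ContDiffOn ℝ 1 f0 (Set.Ioi (0:ℝ)) := by
  rw [show (1 : WithTop ℕ∞) = 0 + 1 from rfl, contDiffOn_succ_iff_deriv_of_isOpen isOpen_Ioi]
  refine ⟨fun y hy => (h0 y hy).differentiableAt.differentiableWithinAt, by simp, ?_⟩
  rw [contDiffOn_zero]
  refine ContinuousOn.congr (f := f1) ?_ ?_
  · exact fun y hy => ((h1 y hy).differentiableAt.continuousAt).continuousWithinAt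
  · exact fun y hy => (h0 y hy).deriv

end PhiAux

/-- For every `a ∈ ℝ` (including `a = 0`), the function `φ_a` is twice continuously
differentiable in `x` and once continuously differentiable in `t` on `ℝ × (0,∞)`, and satisfies
`(1/2)·∂²φ_a/∂x² + ∂φ_a/∂t = −(a²/2)·φ_a` there; equivalently,
`(x,t) ↦ exp(a²t/2)·φ_a(x,t)` is space-time harmonic for `(1/2)∂²/∂x² + ∂/∂t`. -/
theorem phiA_spacetime_harmonic (a : ℝ) :
    (∀ t : ℝ, 0 < t → ContDiff ℝ 2 (fun x : ℝ => phiA a x t)) ∧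
    (∀ x : ℝ, ContDiffOn ℝ 1 (fun t' : ℝ => phiA a x t') (Set.Ioi (0 : ℝ))) ∧
    (∀ x t : ℝ, 0 < t →
      (1 / 2) * deriv (fun x' : ℝ => deriv (fun x'' : ℝ => phiA a x'' t) x') x
        + deriv (fun t' : ℝ => phiA a x t') t
        = -(a ^ 2 / 2) * phiA a x t) := by
  by_cases ha : a = 0
  · subst ha
    have hphiA : ∀ x t : ℝ, phiA 0 x t = PhiAux.F0x t 0 x := by
      intro x t
      simp only [phiA, eq_self_iff_true, if_true, phi0, PhiAux.F0x_zero_eq]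
    have hGeq : ∀ x y : ℝ, PhiAux.G0t x 0 y = PhiAux.F0x y 0 x := by
      intro x y; rw [PhiAux.F0x_zero_eq, PhiAux.G0t_zero_eq]
    refine ⟨?_, ?_, ?_⟩
    · intro t ht
      have he : (fun x : ℝ => phiA 0 x t) = PhiAux.F0x t 0 := funext fun z => hphiA z t
      rw [he]
      exact PhiAux.contDiff_two_of_chain (PhiAux.hasDerivAt_F0x ht 0)
        (PhiAux.hasDerivAt_F0x ht (0+1)) (PhiAux.hasDerivAt_F0x ht (0+1+1))
    · intro x
      have he : (fun t' : ℝ => phiA 0 x t') = fun t' => PhiAux.G0t x 0 t' := by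
        funext t'; rw [hphiA x t', ← hGeq x t']
      rw [he]
      exact PhiAux.contDiffOn_one_of_chain
        (fun y hy => PhiAux.hasDerivAt_G0t x hy 0 y ⟨by linarith, by linarith⟩)
        (fun y hy => PhiAux.hasDerivAt_G0t x hy (0+1) y ⟨by linarith, by linarith⟩)
    · intro x t ht
      have e1 : (fun x'' : ℝ => phiA 0 x'' t) = fun x'' => PhiAux.F0x t 0 x'' :=
        funext fun z => hphiA z t
      rw [e1]
      have d1 : (fun x' : ℝ => deriv (fun x'' : ℝ => PhiAux.F0x t 0 x'') x')
          = fun x' => PhiAux.F0x t (0+1) x' :=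
        funext fun x' => (PhiAux.hasDerivAt_F0x ht 0 x').deriv
      rw [d1, (PhiAux.hasDerivAt_F0x ht (0+1) x).deriv]
      have e2 : (fun t' : ℝ => phiA 0 x t') = fun t' => PhiAux.G0t x 0 t' := by
        funext t'; rw [hphiA x t', ← hGeq x t']
      rw [e2, (PhiAux.hasDerivAt_G0t x ht 0 t ⟨by linarith, by linarith⟩).deriv, hphiA x t]
      linear_combination PhiAux.key_zero x t ht
  · have hphiA : ∀ x t : ℝ, phiA a x t
        = (Real.pi / Real.sinh (a * Real.pi)) * PhiAux.Fx a t 0 x := by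
      intro x t
      simp only [phiA, if_neg ha, phi, PhiAux.Fx_zero_eq]
    have hGeq : ∀ x y : ℝ, PhiAux.Gt a x 0 y = PhiAux.Fx a y 0 x := by
      intro x y; rw [PhiAux.Fx_zero_eq, PhiAux.Gt_zero_eq]
    set Cst := Real.pi / Real.sinh (a * Real.pi) with hCst
    refine ⟨?_, ?_, ?_⟩
    · intro t ht
      have he : (fun x : ℝ => phiA a x t) = fun x => Cst * PhiAux.Fx a t 0 x :=
        funext fun z => hphiA z t
      rw [he]
      exact contDiff_const.mul (PhiAux.contDiff_two_of_chain (PhiAux.hasDerivAt_Fx a ht 0)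
        (PhiAux.hasDerivAt_Fx a ht (0+1)) (PhiAux.hasDerivAt_Fx a ht (0+1+1)))
    · intro x
      have he : (fun t' : ℝ => phiA a x t') = fun t' => Cst * PhiAux.Gt a x 0 t' := by
        funext t'; rw [hphiA x t', ← hGeq x t']
      rw [he]
      exact PhiAux.contDiffOn_one_of_chain
        (fun y hy => (PhiAux.hasDerivAt_Gt a x hy 0 y ⟨by linarith, by linarith⟩).const_mul Cst)
        (fun y hy => (PhiAux.hasDerivAt_Gt a x hy (0+1) y ⟨by linarith, by linarith⟩).const_mul Cst)
    · intro x t ht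
      have e1 : (fun x'' : ℝ => phiA a x'' t) = fun x'' => Cst * PhiAux.Fx a t 0 x'' :=
        funext fun z => hphiA z t
      rw [e1]
      have d1 : (fun x' : ℝ => deriv (fun x'' : ℝ => Cst * PhiAux.Fx a t 0 x'') x')
          = fun x' => Cst * PhiAux.Fx a t (0+1) x' :=
        funext fun x' => ((PhiAux.hasDerivAt_Fx a ht 0 x').const_mul Cst).deriv
      rw [d1, ((PhiAux.hasDerivAt_Fx a ht (0+1) x).const_mul Cst).deriv]
      have e2 : (fun t' : ℝ => phiA a x t') = fun t' => Cst * PhiAux.Gt a x 0 t' := by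
        funext t'; rw [hphiA x t', ← hGeq x t']
      rw [e2, ((PhiAux.hasDerivAt_Gt a x ht 0 t ⟨by linarith, by linarith⟩).const_mul Cst).deriv,
        hphiA x t]
      linear_combination Cst * PhiAux.key_ne a x t ht
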